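/- Let R be a Dedekind domain and N a torsion-free R-module. If N contains a free submodule F such that the quotient N/F is a bounded torsion module, then N is projective. -/

import Mathlib

open scoped nonZeroDivisors

section IdealProj

variable {R : Type*} [CommRing R] [IsDomain R] [IsDedekindDomain R]

/-- A coefficient functional attached to an element `b` of the fraction field that
multiplies `J` into `R`. -/
noncomputable def dedekindCoeffMap {K : Type*} [Field K] [Algebra R K] [IsFractionRing R K]
    (J : Ideal R) (b : K)
    (hb : ∀ y : J, ∃ r : R, algebraMap R K r = b * algebraMap R K (y : R)) :
    ↥J →ₗ[R] R where
  toFun y := (hb y).choose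
  map_add' y z := by
    apply IsFractionRing.injective R K
    rw [(hb (y + z)).choose_spec, map_add, (hb y).choose_spec, (hb z).choose_spec]
    push_cast
    ring
  map_smul' r y := by
    apply IsFractionRing.injective R K
    rw [RingHom.id_apply, (hb (r • y)).choose_spec]
    have : ((r • y : J) : R) = r * (y : R) := rfl
    rw [this, map_mul, smul_eq_mul, map_mul, (hb y).choose_spec]
    try ring

theorem dedekindCoeffMap_spec {K : Type*} [Field K] [Algebra R K] [IsFractionRing R K]
    (J : Ideal R) (b : K)
    (hb : ∀ y : J, ∃ r : R, algebraMap R K r = b * algebraMap R K (y : R)) (y : J) :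
    algebraMap R K (dedekindCoeffMap J b hb y) = b * algebraMap R K (y : R) :=
  (hb y).choose_spec

/-- Every ideal of a Dedekind domain is a projective module. -/
theorem Ideal.projective_of_dedekind (J : Ideal R) : Module.Projective R ↥J := by
  by_cases hJ : J = ⊥
  · subst hJ
    exact Module.Projective.of_split (0 : ↥(⊥ : Ideal R) →ₗ[R] R) 0
      (Subsingleton.elim _ _)
  · set K := FractionRing R
    have hI : (J : FractionalIdeal R⁰ K) ≠ 0 := by
      simpa [FractionalIdeal.coeIdeal_eq_zero] using hJ
    have h1 : (J : FractionalIdeal R⁰ K) * (J : FractionalIdeal R⁰ K)⁻¹ = 1 :=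
      mul_inv_cancel₀ hI
    have hmem : (1 : K) ∈
        ((J : FractionalIdeal R⁰ K) : Submodule R K) *
          (((J : FractionalIdeal R⁰ K)⁻¹ : FractionalIdeal R⁰ K) : Submodule R K) := by
      rw [← FractionalIdeal.coe_mul, h1]
      exact FractionalIdeal.one_mem_one _
    have main : ∀ x ∈ ((J : FractionalIdeal R⁰ K) : Submodule R K) *
        (((J : FractionalIdeal R⁰ K)⁻¹ : FractionalIdeal R⁰ K) : Submodule R K),
        ∃ (γ : Type) (_ : Fintype γ) (a : γ → J) (b : γ → K),
          (∀ k, ∀ y : J, ∃ r : R, algebraMap R K r = b k * algebraMap R K (y : R)) ∧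
          (∑ k, algebraMap R K ((a k : R)) * b k) = x := by
      intro x hx
      refine Submodule.mul_induction_on hx ?_ ?_
      · intro m hm n hn
        rw [FractionalIdeal.mem_coe, FractionalIdeal.mem_coeIdeal] at hm
        obtain ⟨y, hyJ, rfl⟩ := hm
        refine ⟨PUnit, inferInstance, fun _ => ⟨y, hyJ⟩, fun _ => n, ?_, by simp⟩
        intro _ y'
        have hy' : algebraMap R K (y' : R) ∈
            ((J : FractionalIdeal R⁰ K) : Submodule R K) := by
          rw [FractionalIdeal.mem_coe, FractionalIdeal.mem_coeIdeal]
          exact ⟨y', y'.2, rfl⟩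
        have h1' : (J : FractionalIdeal R⁰ K)⁻¹ * (J : FractionalIdeal R⁰ K) = 1 := by
          rw [mul_comm]; exact h1
        have : n * algebraMap R K (y' : R) ∈ (1 : FractionalIdeal R⁰ K) := by
          rw [← h1', ← FractionalIdeal.mem_coe, FractionalIdeal.coe_mul]
          exact Submodule.mul_mem_mul hn hy'
        exact (FractionalIdeal.mem_one_iff _).mp this
      · rintro x y ⟨γ₁, _, a₁, b₁, h₁, s₁⟩ ⟨γ₂, _, a₂, b₂, h₂, s₂⟩
        refine ⟨γ₁ ⊕ γ₂, inferInstance, Sum.elim a₁ a₂, Sum.elim b₁ b₂, ?_, ?_⟩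
        · rintro (k | k) y' <;> [exact h₁ k y'; exact h₂ k y']
        · rw [Fintype.sum_sum_type]
          simp only [Sum.elim_inl, Sum.elim_inr, s₁, s₂]
    obtain ⟨γ, _, a, b, hb, hsum⟩ := main 1 hmem
    -- Build the splitting
    let f : ∀ _ : γ, ↥J →ₗ[R] R := fun k => dedekindCoeffMap J (b k) (hb k)
    let s : ↥J →ₗ[R] (γ → R) := LinearMap.pi f
    let t : (γ → R) →ₗ[R] ↥J := ∑ k, (LinearMap.toSpanSingleton R ↥J (a k)).comp
      (LinearMap.proj k)
    refine Module.Projective.of_split s t ?_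
    ext y
    refine IsFractionRing.injective R K ?_
    have h1 : ((t (s y) : ↥J) : R) = ∑ k, f k y * (a k : R) := by
      show (J.subtype) (t (s y)) = _
      simp only [t, s, LinearMap.sum_apply, LinearMap.comp_apply, LinearMap.proj_apply,
        LinearMap.toSpanSingleton_apply, LinearMap.pi_apply, map_sum]
      simp [smul_eq_mul]
    rw [LinearMap.comp_apply, LinearMap.id_apply, h1, map_sum]
    have h2 : ∀ k, algebraMap R K (f k y * (a k : R)) =
        (algebraMap R K ((a k : R)) * b k) * algebraMap R K (y : R) := by
      intro k
      simp only [f]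
      rw [RingHom.map_mul, dedekindCoeffMap_spec]
      ring
    rw [Finset.sum_congr rfl fun k _ => h2 k, ← Finset.sum_mul, hsum, one_mul]

/-- Kaplansky: every submodule of a free module over a Dedekind domain is projective. -/
theorem submodule_finsupp_projective {ι : Type*} (M : Submodule R (ι →₀ R)) :
    Module.Projective R ↥M := by
  classical
  letI : LinearOrder ι := IsWellOrder.linearOrder WellOrderingRel
  letI : WellFoundedLT ι := ⟨(WellOrderingRel.isWellOrder (α := ι)).wf⟩
  set A : ι → Submodule R (ι →₀ R) := fun i => M ⊓ Finsupp.supported R R (Set.Iic i) with hA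
  set p : ∀ i : ι, ↥(A i) →ₗ[R] R := fun i => (Finsupp.lapply i).comp (A i).subtype with hp
  have hsec : ∀ i : ι, ∃ s : ↥(LinearMap.range (p i)) →ₗ[R] ↥(A i),
      ∀ y, (p i) (s y) = (y : R) := by
    intro i
    haveI := Ideal.projective_of_dedekind (LinearMap.range (p i))
    obtain ⟨h, hh⟩ := Module.projective_lifting_property ((p i).rangeRestrict) LinearMap.id
      (LinearMap.surjective_rangeRestrict _)
    exact ⟨h, fun y => congrArg Subtype.val (LinearMap.congr_fun hh y)⟩
  choose s hs using hsec
  set g : ∀ i : ι, ↥(LinearMap.range (p i)) →ₗ[R] ↥M :=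
    fun i => (Submodule.inclusion (inf_le_left : A i ≤ M)).comp (s i) with hg
  set T : (Π₀ i : ι, ↥(LinearMap.range (p i))) →ₗ[R] ↥M := DFinsupp.lsum ℕ g with hT
  -- support bound for elements of `A i`
  have hsupp : ∀ (i : ι) (m : ↥(A i)), ∀ j : ι, ¬ j ≤ i → ((m : ι →₀ R)) j = 0 := by
    intro i m j hj
    exact Finsupp.mem_supported' R _ |>.mp m.2.2 j hj
  -- `T` as a finite sum
  have hTsum : ∀ x : Π₀ i : ι, ↥(LinearMap.range (p i)),
      T x = ∑ j ∈ x.support, g j (x j) := by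
    intro x
    rw [hT, DFinsupp.lsum_apply_apply, DFinsupp.sumAddHom_apply]
    rfl
  -- coordinate computation
  have coordT : ∀ (x : Π₀ i : ι, ↥(LinearMap.range (p i))) (i : ι),
      (∀ j ∈ x.support, j ≤ i) → ((T x : ι →₀ R)) i = ((x i : R)) := by
    intro x i hx
    rw [hTsum]
    have hcoe : ((∑ j ∈ x.support, g j (x j) : ↥M) : ι →₀ R) i
        = ∑ j ∈ x.support, ((g j (x j) : ι →₀ R)) i := by
      rw [AddSubmonoidClass.coe_finset_sum, Finsupp.finset_sum_apply]
    rw [hcoe]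
    rw [Finset.sum_eq_single i]
    · show ((s i (x i) : ι →₀ R)) i = _
      exact hs i (x i)
    · intro j hj hji
      have hj' : j < i := lt_of_le_of_ne (hx j hj) hji
      exact hsupp j (s j (x j)) i (not_le.mpr hj')
    · intro hi
      have : x i = 0 := by
        by_contra hne
        exact hi (DFinsupp.mem_support_iff.mpr hne)
      rw [this]
      simp
  -- injectivity
  have hinj : Function.Injective T := by
    intro u v huv
    have h0 : ∀ x, T x = 0 → x = 0 := by
      intro x hx
      by_contra hne
      have hsne : x.support.Nonempty :=
        Finset.nonempty_iff_ne_empty.mpr (fun h => hne (DFinsupp.support_eq_empty.mp h))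
      set i := x.support.max' hsne with hi
      have := coordT x i (fun j hj => x.support.le_max' j hj)
      rw [hx] at this
      have hxi : ((x i : R)) = 0 := by simpa using this.symm
      have : x i = 0 := Subtype.ext hxi
      exact DFinsupp.mem_support_iff.mp (x.support.max'_mem hsne) this
    have := h0 (u - v) (by rw [map_sub, huv, sub_self])
    exact sub_eq_zero.mp this
  -- surjectivity
  have hsurj : Function.Surjective T := by
    have main : ∀ i : ι, ∀ m : ι →₀ R, m ∈ M → (∀ j ∈ m.support, j ≤ i) →
        ∃ x, ((T x : ι →₀ R)) = m := by
      intro i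
      induction i using WellFoundedLT.induction with
      | _ i IH =>
        intro m hmM hmsupp
        have hmA : m ∈ A i := ⟨hmM, Finsupp.mem_supported' R m |>.mpr
          (fun j hj => by
            by_contra h
            exact hj (hmsupp j (Finsupp.mem_support_iff.mpr h)))⟩
        set a : ↥(LinearMap.range (p i)) := ⟨p i ⟨m, hmA⟩, ⟨⟨m, hmA⟩, rfl⟩⟩ with ha
        set m' : ι →₀ R := m - ((s i a : ↥(A i)) : ι →₀ R) with hm'
        have hm'A : m' ∈ A i := sub_mem hmA (s i a).2
        have hm'i : m' i = 0 := by
          have h1 : ((s i a : ↥(A i)) : ι →₀ R) i = (a : R) := hs i a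
          have h2 : (a : R) = m i := rfl
          rw [hm', Finsupp.sub_apply, h1, h2, sub_self]
        have hm'supp : ∀ j ∈ m'.support, j < i := by
          intro j hj
          have hji : j ≤ i := by
            by_contra h
            have : m' j = 0 := by
              rw [hm', Finsupp.sub_apply, hsupp i ⟨m, hmA⟩ j h,
                hsupp i (s i a) j h, sub_self]
            exact Finsupp.mem_support_iff.mp hj this
          refine lt_of_le_of_ne hji (fun h => ?_)
          exact Finsupp.mem_support_iff.mp hj (h ▸ hm'i)
        have key : ((T (DFinsupp.single i a) : ↥M) : ι →₀ R) = ((s i a : ↥(A i)) : ι →₀ R) := by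
          rw [hT, DFinsupp.lsum_single]
          rfl
        by_cases hzero : m' = 0
        · refine ⟨DFinsupp.single i a, ?_⟩
          rw [key]
          have h0' : m - ((s i a : ↥(A i)) : ι →₀ R) = 0 := by rw [← hm']; exact hzero
          exact (sub_eq_zero.mp h0').symm
        · have hne : m'.support.Nonempty := Finsupp.support_nonempty_iff.mpr hzero
          set j := m'.support.max' hne
          obtain ⟨x', hx'⟩ := IH j (hm'supp j (m'.support.max'_mem hne)) m' hm'A.1
            (fun k hk => m'.support.le_max' k hk)
          refine ⟨x' + DFinsupp.single i a, ?_⟩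
          rw [map_add]
          have : ((T x' + T (DFinsupp.single i a) : ↥M) : ι →₀ R)
              = ((T x' : ι →₀ R)) + ((T (DFinsupp.single i a) : ι →₀ R)) := rfl
          rw [this, hx', key]
          rw [hm']
          abel
    intro m
    by_cases h0 : (m : ι →₀ R) = 0
    · exact ⟨0, by rw [map_zero, (Subtype.ext h0 : m = 0)]⟩
    · have hne : (m : ι →₀ R).support.Nonempty := Finsupp.support_nonempty_iff.mpr h0
      obtain ⟨x, hx⟩ := main ((m : ι →₀ R).support.max' hne) (m : ι →₀ R) m.2
        (fun j hj => (m : ι →₀ R).support.le_max' j hj)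
      exact ⟨x, Subtype.ext hx⟩
  haveI : ∀ i : ι, Module.Projective R ↥(LinearMap.range (p i)) :=
    fun i => Ideal.projective_of_dedekind _
  exact Module.Projective.of_equiv (LinearEquiv.ofBijective T ⟨hinj, hsurj⟩)

end IdealProj

/-- Let `R` be a Dedekind domain and `N` a torsion-free `R`-module. If `N` contains a
free submodule `F` such that `N/F` is a bounded torsion module, then `N` is projective. -/
theorem projective_of_extension_of_free_by_bounded_torsion
    (R : Type*) [CommRing R] [IsDomain R] [IsDedekindDomain R]
    (N : Type*) [AddCommGroup N] [Module R N]
    (htf : ∀ (r : R) (n : N), r • n = 0 → r = 0 ∨ n = 0)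
    (F : Submodule R N) (hF : Module.Free R F)
    (htor : ∀ x : N ⧸ F, ∃ r : R, r ≠ 0 ∧ r • x = 0)
    (hbdd : ∃ I : Ideal R, I ≠ ⊥ ∧ ∀ a ∈ I, ∀ x : N ⧸ F, a • x = 0) :
    Module.Projective R N := by
  haveI := hF
  obtain ⟨I, hI, hIbd⟩ := hbdd
  obtain ⟨r, hrI, hr0⟩ := Submodule.exists_mem_ne_zero_of_ne_bot hI
  have hrF : ∀ n : N, r • n ∈ F := by
    intro n
    have := hIbd r hrI (Submodule.Quotient.mk n)
    rwa [← Submodule.Quotient.mk_smul, Submodule.Quotient.mk_eq_zero] at this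
  set ι := Module.Free.ChooseBasisIndex R ↥F
  set b : Module.Basis ι R ↥F := Module.Free.chooseBasis R ↥F
  set L : N →ₗ[R] (ι →₀ R) :=
    b.repr.toLinearMap.comp (LinearMap.codRestrict F (r • LinearMap.id) hrF) with hL
  have hLinj : Function.Injective L := by
    intro n₁ n₂ h
    have h' : (⟨r • n₁, hrF n₁⟩ : ↥F) = ⟨r • n₂, hrF n₂⟩ := b.repr.injective h
    have h'' : r • n₁ = r • n₂ := congrArg Subtype.val h'
    have h3 : r • (n₁ - n₂) = 0 := by rw [smul_sub, h'', sub_self]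
    rcases htf r (n₁ - n₂) h3 with h4 | h4
    · exact absurd h4 hr0
    · exact sub_eq_zero.mp h4
  haveI : Module.Projective R ↥(LinearMap.range L) := submodule_finsupp_projective _
  exact Module.Projective.of_equiv (LinearEquiv.ofInjective L hLinj).symm
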